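/- Let lines L_1, ..., L_n be given by L_j(w) = v_j·w − p_j with v_j ≥ 0. Fix k ≥ 1, let w_1 < w_2 < w_3 be reals, and suppose line L_i is not among the top 2k−1 lines (by value) at w_2. Then either L_i is not among the top k lines at w_1, or L_i is not among the top k lines at w_3. -/
import Mathlib


open Classical

/-- If a line `L i` is not among the top `2k−1` lines at `w₂`, then it is not
among the top `k` lines at `w₁` or it is not among the top `k` lines at `w₃`,
whenever `w₁ < w₂ < w₃` (lines in general position). -/
theorem stmt5 (n : ℕ) (v p : Fin n → ℝ) (hv : ∀ j, 0 ≤ v j)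
    (k : ℕ) (hk : 1 ≤ k) (i : Fin n)
    (w₁ w₂ w₃ : ℝ) (h12 : w₁ < w₂) (h23 : w₂ < w₃)
    (L : Fin n → ℝ → ℝ) (hL : ∀ j x, L j x = v j * x - p j)
    (hgen : ∀ j, j ≠ i →
      L j w₁ ≠ L i w₁ ∧ L j w₂ ≠ L i w₂ ∧ L j w₃ ≠ L i w₃)
    (h2 : 2 * k - 1 ≤
      (Finset.univ.filter (fun j => j ≠ i ∧ L i w₂ < L j w₂)).card) :
    k ≤ (Finset.univ.filter (fun j => j ≠ i ∧ L i w₁ < L j w₁)).card ∨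
    k ≤ (Finset.univ.filter (fun j => j ≠ i ∧ L i w₃ < L j w₃)).card := by
  set A := (Finset.univ.filter (fun j => j ≠ i ∧ L i w₁ < L j w₁)) with hA
  set B := (Finset.univ.filter (fun j => j ≠ i ∧ L i w₂ < L j w₂)) with hB
  set C := (Finset.univ.filter (fun j => j ≠ i ∧ L i w₃ < L j w₃)) with hC
  have hsub : B ⊆ A ∪ C := by
    intro j hj
    simp only [hB, Finset.mem_filter, Finset.mem_univ, true_and] at hj
    obtain ⟨hji, h2j⟩ := hj
    by_cases h1 : L i w₁ < L j w₁
    · exact Finset.mem_union_left _ (by simp [hA, hji, h1])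
    · -- j crossed i: slope bigger
      have h1' : L j w₁ < L i w₁ := lt_of_le_of_ne (not_lt.mp h1) (hgen j hji).1
      have hd : v i < v j := by
        by_contra hvle
        push_neg at hvle
        have : L j w₂ - L j w₁ ≤ L i w₂ - L i w₁ := by
          simp only [hL]
          nlinarith [sub_nonneg.mpr (le_of_lt h12)]
        linarith
      have h3 : L i w₃ < L j w₃ := by
        simp only [hL] at h2j ⊢
        nlinarith [sub_pos.mpr h23]
      exact Finset.mem_union_right _ (by simp [hC, hji, h3])
  have hcard : B.card ≤ A.card + C.card :=
    le_trans (Finset.card_le_card hsub) (Finset.card_union_le _ _)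
  by_contra h
  push_neg at h
  omega
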